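/- Let v₀, v₁, v₂, v₃ ∈ ℂ² be nonzero vectors that are pairwise linearly independent over ℂ, and let λ₀, λ₁, λ₂, λ₃ ∈ ℂ be nonzero scalars. Set w_i = λ_i·v_i for i = 0,…,3. Then f(w₀,w₁,w₂,w₃) · ∫_{Δ³} Q_w(t)^{-2} dt₁ dt₂ dt₃ = f(v₀,v₁,v₂,v₃) · ∫_{Δ³} Q_v(t)^{-2} dt₁ dt₂ dt₃. -/

import Mathlib

open MeasureTheory

/-- `det2 v w = v₁·w₂ − v₂·w₁`, the determinant of the 2×2 matrix with columns `v` and `w`. -/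
noncomputable def det2 (v w : Fin 2 → ℂ) : ℂ := v 0 * w 1 - v 1 * w 0

/-- `f(v₀,v₁,v₂,v₃) = Im( det(v₀,v₁)·det(v₂,v₃)·conj(det(v₀,v₃))·conj(det(v₁,v₂)) )`. -/
noncomputable def f4 (v₀ v₁ v₂ v₃ : Fin 2 → ℂ) : ℝ :=
  (det2 v₀ v₁ * det2 v₂ v₃ * (starRingEnd ℂ) (det2 v₀ v₃) *
    (starRingEnd ℂ) (det2 v₁ v₂)).im

/-- `Q_v(t) = ∑_{i≠j} t_i t_j |det(v_i,v_j)|²`, sum over ordered pairs of distinct indices. -/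
noncomputable def Qform (v : Fin 4 → Fin 2 → ℂ) (t : Fin 4 → ℝ) : ℝ :=
  ∑ i : Fin 4, ∑ j : Fin 4,
    if i ≠ j then t i * t j * ‖det2 (v i) (v j)‖ ^ 2 else 0

/-- The parameter domain `{(t₁,t₂,t₃) : tᵢ ≥ 0, t₁+t₂+t₃ ≤ 1}` of the 3-simplex. -/
def simplexDom : Set (Fin 3 → ℝ) :=
  {p | (∀ i, 0 ≤ p i) ∧ p 0 + p 1 + p 2 ≤ 1}

/-- The point of the 3-simplex with coordinates `(1−t₁−t₂−t₃, t₁, t₂, t₃)`. -/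
noncomputable def tOf (p : Fin 3 → ℝ) : Fin 4 → ℝ :=
  ![1 - p 0 - p 1 - p 2, p 0, p 1, p 2]

/-- `∫_{Δ³} Q_v(t)^{-2} dt₁ dt₂ dt₃`. -/
noncomputable def Jint (v : Fin 4 → Fin 2 → ℂ) : ℝ :=
  ∫ p in simplexDom, (Qform v (tOf p) ^ 2)⁻¹

noncomputable def Dfun (c : Fin 4 → ℝ) (p : Fin 3 → ℝ) : ℝ := ∑ i, c i * tOf p i

noncomputable def Phi (c : Fin 4 → ℝ) (p : Fin 3 → ℝ) : Fin 3 → ℝ :=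
  fun j => c j.succ * p j / Dfun c p

lemma Dfun_eq (c : Fin 4 → ℝ) (p : Fin 3 → ℝ) :
    Dfun c p = c 0 * (1 - p 0 - p 1 - p 2) + c 1 * p 0 + c 2 * p 1 + c 3 * p 2 := by
  simp [Dfun, Fin.sum_univ_four, tOf]

lemma Dfun_pos {c : Fin 4 → ℝ} (hc : ∀ i, 0 < c i) {p : Fin 3 → ℝ} (hp : p ∈ simplexDom) :
    0 < Dfun c p := by
  obtain ⟨h0, h1⟩ := hp
  have := h0 0; have := h0 1; have := h0 2
  have := hc 0; have := hc 1; have := hc 2; have := hc 3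
  rw [Dfun_eq]
  set m := min (min (c 0) (c 1)) (min (c 2) (c 3)) with hm
  have hmpos : 0 < m := by
    simp only [hm, lt_min_iff]; exact ⟨⟨hc 0, hc 1⟩, hc 2, hc 3⟩
  have e0 : m ≤ c 0 := le_trans (min_le_left _ _) (min_le_left _ _)
  have e1 : m ≤ c 1 := le_trans (min_le_left _ _) (min_le_right _ _)
  have e2 : m ≤ c 2 := le_trans (min_le_right _ _) (min_le_left _ _)
  have e3 : m ≤ c 3 := le_trans (min_le_right _ _) (min_le_right _ _)
  nlinarith [mul_nonneg (sub_nonneg.2 e0) (by linarith : (0:ℝ) ≤ 1 - p 0 - p 1 - p 2),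
    mul_nonneg (sub_nonneg.2 e1) (h0 0), mul_nonneg (sub_nonneg.2 e2) (h0 1),
    mul_nonneg (sub_nonneg.2 e3) (h0 2)]

lemma tOf_Phi {c : Fin 4 → ℝ} {p : Fin 3 → ℝ} (hD : Dfun c p ≠ 0) (i : Fin 4) :
    tOf (Phi c p) i = c i * tOf p i / Dfun c p := by
  fin_cases i
  · show 1 - Phi c p 0 - Phi c p 1 - Phi c p 2 = c 0 * (1 - p 0 - p 1 - p 2) / Dfun c p
    show (1 : ℝ) - c 1 * p 0 / Dfun c p - c 2 * p 1 / Dfun c p - c 3 * p 2 / Dfun c p = _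
    field_simp
    rw [Dfun_eq]
    ring
  · rfl
  · rfl
  · rfl

lemma tOf_mem {p : Fin 3 → ℝ} (hp : p ∈ simplexDom) (i : Fin 4) : 0 ≤ tOf p i := by
  obtain ⟨h0, h1⟩ := hp
  fin_cases i
  · show (0:ℝ) ≤ 1 - p 0 - p 1 - p 2; linarith
  · exact h0 0
  · exact h0 1
  · exact h0 2

lemma sum_tOf (p : Fin 3 → ℝ) : ∑ i, tOf p i = 1 := by
  simp [Fin.sum_univ_four, tOf]; ring

lemma Phi_mem {c : Fin 4 → ℝ} (hc : ∀ i, 0 < c i) {p : Fin 3 → ℝ} (hp : p ∈ simplexDom) :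
    Phi c p ∈ simplexDom := by
  have hD := Dfun_pos hc hp
  constructor
  · intro j
    show 0 ≤ c j.succ * p j / Dfun c p
    have h1 := hp.1 j
    have h2 := hc j.succ
    positivity
  · show Phi c p 0 + Phi c p 1 + Phi c p 2 ≤ 1
    show c 1 * p 0 / Dfun c p + c 2 * p 1 / Dfun c p + c 3 * p 2 / Dfun c p ≤ 1
    rw [← add_div, ← add_div, div_le_one hD, Dfun_eq]
    have h00 : 0 ≤ 1 - p 0 - p 1 - p 2 := by have := hp.2; linarith
    nlinarith [mul_nonneg (hc 0).le h00]

lemma Dfun_inv_Phi {c : Fin 4 → ℝ} (hc : ∀ i, 0 < c i) {p : Fin 3 → ℝ} (hp : p ∈ simplexDom) :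
    Dfun (fun i => (c i)⁻¹) (Phi c p) = (Dfun c p)⁻¹ := by
  have hD := (Dfun_pos hc hp).ne'
  have key : ∀ i : Fin 4, (fun i => (c i)⁻¹) i * tOf (Phi c p) i = tOf p i * (Dfun c p)⁻¹ := by
    intro i
    simp only
    rw [tOf_Phi hD i, div_eq_mul_inv]
    have := (hc i).ne'
    field_simp
  unfold Dfun
  rw [Finset.sum_congr rfl (fun i _ => key i), ← Finset.sum_mul, sum_tOf, one_mul]
  rfl

lemma Phi_Phi {c : Fin 4 → ℝ} (hc : ∀ i, 0 < c i) {p : Fin 3 → ℝ} (hp : p ∈ simplexDom) :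
    Phi (fun i => (c i)⁻¹) (Phi c p) = p := by
  have hD := (Dfun_pos hc hp).ne'
  funext j
  show (c j.succ)⁻¹ * Phi c p j / Dfun (fun i => (c i)⁻¹) (Phi c p) = p j
  rw [Dfun_inv_Phi hc hp]
  show (c j.succ)⁻¹ * (c j.succ * p j / Dfun c p) / (Dfun c p)⁻¹ = p j
  have hcj := (hc j.succ).ne'
  field_simp

noncomputable def dDlin (c : Fin 4 → ℝ) : (Fin 3 → ℝ) →L[ℝ] ℝ :=
  (c 1 - c 0) • ContinuousLinearMap.proj 0 + (c 2 - c 0) • ContinuousLinearMap.proj 1 +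
    (c 3 - c 0) • ContinuousLinearMap.proj 2

lemma dDlin_apply (c : Fin 4 → ℝ) (h : Fin 3 → ℝ) :
    dDlin c h = (c 1 - c 0) * h 0 + (c 2 - c 0) * h 1 + (c 3 - c 0) * h 2 := by
  simp [dDlin]

lemma hasFDerivAt_Dfun (c : Fin 4 → ℝ) (p : Fin 3 → ℝ) :
    HasFDerivAt (Dfun c) (dDlin c) p := by
  have : Dfun c = fun q => c 0 + dDlin c q := by
    funext q
    rw [Dfun_eq, dDlin_apply]
    ring
  rw [this]
  exact (dDlin c).hasFDerivAt.const_add (c 0)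

noncomputable def Mmat (c : Fin 4 → ℝ) (p : Fin 3 → ℝ) : Matrix (Fin 3) (Fin 3) ℝ :=
  fun j k => (c j.succ * ((if j = k then Dfun c p else 0) - p j * (c k.succ - c 0))) /
    (Dfun c p) ^ 2

noncomputable def Lmap (c : Fin 4 → ℝ) (p : Fin 3 → ℝ) : (Fin 3 → ℝ) →L[ℝ] (Fin 3 → ℝ) :=
  LinearMap.toContinuousLinearMap (Matrix.toLin' (Mmat c p))

lemma Lmap_apply (c : Fin 4 → ℝ) (p : Fin 3 → ℝ) (h : Fin 3 → ℝ) (j : Fin 3) :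
    Lmap c p h j = ∑ k, Mmat c p j k * h k := by
  simp [Lmap, Matrix.toLin'_apply, Matrix.mulVec, dotProduct, Fin.sum_univ_three]

lemma det_Lmap {c : Fin 4 → ℝ} {p : Fin 3 → ℝ} (hD : Dfun c p ≠ 0) :
    (Lmap c p).det = c 0 * c 1 * c 2 * c 3 / (Dfun c p) ^ 4 := by
  have h1 : (Lmap c p).det = (Mmat c p).det := by
    rw [ContinuousLinearMap.det, Lmap, LinearMap.coe_toContinuousLinearMap,
      LinearMap.det_toLin']
  rw [h1]
  rw [Matrix.det_fin_three]
  simp [Mmat, show ((0:Fin 3).succ) = (1:Fin 4) from rfl, show ((1:Fin 3).succ) = (2:Fin 4) from rfl,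
    show ((2:Fin 3).succ) = (3:Fin 4) from rfl]
  have hd : Dfun c p = c 0 * (1 - p 0 - p 1 - p 2) + c 1 * p 0 + c 2 * p 1 + c 3 * p 2 :=
    Dfun_eq c p
  field_simp
  rw [hd]
  ring

lemma hasFDerivAt_Phi {c : Fin 4 → ℝ} {p : Fin 3 → ℝ} (hD : Dfun c p ≠ 0) :
    HasFDerivAt (Phi c) (Lmap c p) p := by
  rw [hasFDerivAt_pi']
  intro j
  have h1 : HasFDerivAt (fun q : Fin 3 → ℝ => c j.succ * q j)
      (c j.succ • ContinuousLinearMap.proj j) p :=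
    ((ContinuousLinearMap.proj j : (Fin 3 → ℝ) →L[ℝ] ℝ).hasFDerivAt (x := p)).const_mul (c j.succ)
  have h2 : HasFDerivAt (fun q => (Dfun c q)⁻¹)
      ((-ContinuousLinearMap.mulLeftRight ℝ ℝ ((Dfun c p)⁻¹) ((Dfun c p)⁻¹)).comp (dDlin c)) p :=
    (hasFDerivAt_inv' hD).comp p (hasFDerivAt_Dfun c p)
  have h3 := h1.mul h2
  have h4 : (fun q : Fin 3 → ℝ => c j.succ * q j * (Dfun c q)⁻¹) = fun q => Phi c q j := by
    funext q
    rw [Phi, div_eq_mul_inv]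
  simp only [Pi.mul_def] at h3
  rw [h4] at h3
  refine h3.congr_fderiv (Eq.symm ?_)
  ext h
  simp only [ContinuousLinearMap.coe_comp', Function.comp_apply, ContinuousLinearMap.proj_apply,
    Lmap_apply, ContinuousLinearMap.add_apply, ContinuousLinearMap.coe_smul', Pi.smul_apply,
    smul_eq_mul, dDlin_apply, Fin.sum_univ_three, ContinuousLinearMap.mulLeftRight_apply,
    ContinuousLinearMap.neg_apply]
  fin_cases j <;>
  · simp [Mmat, show ((0:Fin 3).succ) = (1:Fin 4) from rfl, show ((1:Fin 3).succ) = (2:Fin 4) from rfl,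
      show ((2:Fin 3).succ) = (3:Fin 4) from rfl]
    field_simp
    ring

lemma Qform_Phi {v w : Fin 4 → Fin 2 → ℂ} {c : Fin 4 → ℝ}
    (hA : ∀ i j, ‖det2 (w i) (w j)‖ ^ 2
      = c i * c j * ‖det2 (v i) (v j)‖ ^ 2)
    {p : Fin 3 → ℝ} (hD : Dfun c p ≠ 0) :
    Qform v (tOf (Phi c p)) = Qform w (tOf p) / (Dfun c p) ^ 2 := by
  rw [Qform, Qform, Finset.sum_div]
  apply Finset.sum_congr rfl; intro i _
  rw [Finset.sum_div]
  apply Finset.sum_congr rfl; intro j _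
  by_cases h : i = j
  · simp [h]
  · simp only [ne_eq, h, not_false_eq_true, if_true]
    rw [tOf_Phi hD, tOf_Phi hD, hA]
    field_simp

lemma measurableSet_simplexDom : MeasurableSet simplexDom := by
  have h1 : simplexDom = {p : Fin 3 → ℝ | ∀ i, 0 ≤ p i} ∩ {p | p 0 + p 1 + p 2 ≤ 1} := rfl
  rw [h1]
  apply MeasurableSet.inter
  · rw [Set.setOf_forall]
    exact MeasurableSet.iInter fun i => measurableSet_le measurable_const (measurable_pi_apply i)
  · exact measurableSet_le
      (((measurable_pi_apply 0).add (measurable_pi_apply 1)).add (measurable_pi_apply 2))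
      measurable_const

lemma Jint_scale (v w : Fin 4 → Fin 2 → ℂ) (c : Fin 4 → ℝ) (hc : ∀ i, 0 < c i)
    (hA : ∀ i j, ‖det2 (w i) (w j)‖ ^ 2
      = c i * c j * ‖det2 (v i) (v j)‖ ^ 2) :
    Jint v = (c 0 * c 1 * c 2 * c 3) * Jint w := by
  have hc' : ∀ i, 0 < (fun i => (c i)⁻¹) i := fun i => inv_pos.2 (hc i)
  have himg : Phi c '' simplexDom = simplexDom := by
    apply Set.Subset.antisymm
    · rintro q ⟨p, hp, rfl⟩; exact Phi_mem hc hp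
    · intro q hq
      refine ⟨Phi (fun i => (c i)⁻¹) q, Phi_mem hc' hq, ?_⟩
      have := Phi_Phi (c := fun i => (c i)⁻¹) hc' hq
      simpa [inv_inv] using this
  have hderiv : ∀ p ∈ simplexDom,
      HasFDerivWithinAt (Phi c) (Lmap c p) simplexDom p := fun p hp =>
    (hasFDerivAt_Phi (Dfun_pos hc hp).ne').hasFDerivWithinAt
  have hinj : Set.InjOn (Phi c) simplexDom := by
    intro a ha b hb hab
    have h2 := congrArg (Phi (fun i => (c i)⁻¹)) hab
    rwa [Phi_Phi hc ha, Phi_Phi hc hb] at h2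
  have key := integral_image_eq_integral_abs_det_fderiv_smul volume measurableSet_simplexDom
    hderiv hinj (fun q => (Qform v (tOf q) ^ 2)⁻¹)
  rw [himg] at key
  rw [Jint, key]
  rw [show (c 0 * c 1 * c 2 * c 3) * Jint w
      = ∫ p in simplexDom, (c 0 * c 1 * c 2 * c 3) * (Qform w (tOf p) ^ 2)⁻¹ from
    (MeasureTheory.integral_const_mul _ _).symm]
  apply MeasureTheory.setIntegral_congr_fun measurableSet_simplexDom
  intro p hp
  have hD := Dfun_pos hc hp
  simp only [smul_eq_mul]
  rw [det_Lmap hD.ne', Qform_Phi hA hD.ne']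
  have g0 := hc 0; have g1 := hc 1; have g2 := hc 2; have g3 := hc 3
  rw [abs_of_pos (by positivity)]
  rw [div_pow, inv_div, div_eq_mul_inv ((Dfun c p ^ 2) ^ 2)]
  have h5 : (Dfun c p ^ 2) ^ 2 = Dfun c p ^ 4 := by ring
  rw [h5, div_eq_mul_inv]
  calc c 0 * c 1 * c 2 * c 3 * (Dfun c p ^ 4)⁻¹ * (Dfun c p ^ 4 * (Qform w (tOf p) ^ 2)⁻¹)
      = c 0 * c 1 * c 2 * c 3 * (Dfun c p ^ 4 * (Dfun c p ^ 4)⁻¹) * (Qform w (tOf p) ^ 2)⁻¹ := by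
        ring
    _ = c 0 * c 1 * c 2 * c 3 * (Qform w (tOf p) ^ 2)⁻¹ := by
        rw [mul_inv_cancel₀ (pow_ne_zero _ hD.ne'), mul_one]

/-- `f(v₀,…,v₃)·∫_{Δ³} Q_v(t)^{-2} dt` is invariant under rescaling each vector by a
nonzero scalar. -/
theorem f4_mul_Jint_scaling_invariant (v : Fin 4 → Fin 2 → ℂ)
    (hv : ∀ i, v i ≠ 0)
    (hind : ∀ i j : Fin 4, i ≠ j → LinearIndependent ℂ ![v i, v j])
    (l : Fin 4 → ℂ) (hl : ∀ i, l i ≠ 0) (w : Fin 4 → Fin 2 → ℂ)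
    (hw : ∀ i, w i = l i • v i) :
    f4 (w 0) (w 1) (w 2) (w 3) * Jint w = f4 (v 0) (v 1) (v 2) (v 3) * Jint v := by
  set c : Fin 4 → ℝ := fun i => ‖l i‖ ^ 2 with hcdef
  have hc : ∀ i, 0 < c i := fun i => pow_pos (norm_pos_iff.mpr (hl i)) 2
  have hdet : ∀ i j, det2 (w i) (w j) = l i * l j * det2 (v i) (v j) := by
    intro i j
    simp only [det2, hw, Pi.smul_apply, smul_eq_mul]
    try ring
  have hA : ∀ i j, ‖det2 (w i) (w j)‖ ^ 2
      = c i * c j * ‖det2 (v i) (v j)‖ ^ 2 := by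
    intro i j
    rw [hdet]
    simp only [norm_mul, mul_pow, hcdef]
    try ring
  have hf4 : f4 (w 0) (w 1) (w 2) (w 3)
      = (c 0 * c 1 * c 2 * c 3) * f4 (v 0) (v 1) (v 2) (v 3) := by
    rw [f4, f4, hdet, hdet, hdet, hdet]
    have h1 : (l 0 * l 1 * det2 (v 0) (v 1)) * (l 2 * l 3 * det2 (v 2) (v 3)) *
        (starRingEnd ℂ) (l 0 * l 3 * det2 (v 0) (v 3)) *
        (starRingEnd ℂ) (l 1 * l 2 * det2 (v 1) (v 2))
        = ((l 0 * l 1 * l 2 * l 3) * (starRingEnd ℂ) (l 0 * l 1 * l 2 * l 3)) *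
          (det2 (v 0) (v 1) * det2 (v 2) (v 3) * (starRingEnd ℂ) (det2 (v 0) (v 3)) *
            (starRingEnd ℂ) (det2 (v 1) (v 2))) := by
      simp only [map_mul]
      ring
    rw [h1, Complex.mul_conj]
    rw [Complex.mul_im]
    simp only [Complex.ofReal_re, Complex.ofReal_im, zero_mul, add_zero]
    have h2 : Complex.normSq (l 0 * l 1 * l 2 * l 3) = c 0 * c 1 * c 2 * c 3 := by
      simp only [hcdef, ← Complex.sq_norm]
      rw [norm_mul, norm_mul, norm_mul]
      ring
    rw [h2]
  rw [hf4, Jint_scale v w c hc hA]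
  ring
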